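/- Let A be an associative unital ℂ-algebra with elements x, θ, h satisfying x h = h x, θ h = q j h θ where j = e^{2πi/3}, and such that θ' := θ + (h/(q-1)) x satisfies θ'³ = 0, x θ' = q θ' x, and h³ = 0. Then θ³ = 0. -/

import Mathlib

theorem theta_cubed_zero
    (A : Type*) [Ring A] [Algebra ℂ A]
    (x θ h : A) (q j : ℂ)
    (hj : j = Complex.exp (2 * ↑Real.pi * Complex.I / 3))
    (hq : q ≠ 1)
    (hxh : x * h = h * x)
    (hθh : θ * h = (q * j) • (h * θ))
    (θ' : A) (hθ' : θ' = θ + (q - 1)⁻¹ • (h * x))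
    (hθ'3 : θ' ^ 3 = 0)
    (hxθ' : x * θ' = q • (θ' * x))
    (hh3 : h ^ 3 = 0) :
    θ ^ 3 = 0 := by
  have hq' : q - 1 ≠ 0 := sub_ne_zero.mpr hq
  -- j is a primitive cube root of unity
  have hprim : IsPrimitiveRoot j 3 := by
    rw [hj]
    have := Complex.isPrimitiveRoot_exp 3 (by norm_num)
    convert this using 3
    norm_num
  have hj3 : j ^ 3 = 1 := hprim.pow_eq_one
  have hjne : j ≠ 1 := hprim.ne_one (by norm_num)
  have hsum : 1 + j + j ^ 2 = 0 := by
    have h1 : (j - 1) * (1 + j + j ^ 2) = 0 := by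
      have h2 : (j - 1) * (1 + j + j ^ 2) = j ^ 3 - 1 := by ring
      rw [h2, hj3]; ring
    rcases mul_eq_zero.mp h1 with h0 | h0
    · exact absurd (sub_eq_zero.mp h0) hjne
    · exact h0
  -- normal form rewrite rules
  have rxh : ∀ t : A, x * (h * t) = h * (x * t) := by
    intro t; rw [← mul_assoc, hxh, mul_assoc]
  have rθh : ∀ t : A, θ * (h * t) = (q * j) • (h * (θ * t)) := by
    intro t; rw [← mul_assoc, hθh, smul_mul_assoc, mul_assoc]
  have rxθ' : x * θ = q • (θ * x) + h * (x * x) := by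
    have e2 : x * θ + (q - 1)⁻¹ • (h * (x * x)) =
        q • (θ * x) + (q * (q - 1)⁻¹) • (h * (x * x)) := by
      calc x * θ + (q - 1)⁻¹ • (h * (x * x))
          = x * (θ + (q - 1)⁻¹ • (h * x)) := by
            rw [mul_add, mul_smul_comm, rxh]
        _ = q • ((θ + (q - 1)⁻¹ • (h * x)) * x) := by rw [← hθ']; exact hxθ'
        _ = q • (θ * x) + (q * (q - 1)⁻¹) • (h * (x * x)) := by
            rw [add_mul, smul_mul_assoc, smul_add, smul_smul, mul_assoc]
    have e3 := eq_sub_of_add_eq e2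
    rw [e3]
    match_scalars
    · ring
    · field_simp
  have rxθ : ∀ t : A, x * (θ * t) = q • (θ * (x * t)) + h * (x * (x * t)) := by
    intro t
    rw [← mul_assoc, rxθ', add_mul, smul_mul_assoc, mul_assoc, mul_assoc, mul_assoc]
  have hmm : h * h * h = 0 := by
    have : h ^ 3 = h * h * h := by rw [pow_succ, sq]
    rw [← this, hh3]
  have h3' : h * (h * h) = 0 := by rw [← mul_assoc, hmm]
  have h3 : ∀ t : A, h * (h * (h * t)) = 0 := by
    intro t
    rw [← mul_assoc, ← mul_assoc, hmm, zero_mul]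
  rw [← hθ'3, hθ']
  simp only [pow_succ, pow_zero, one_mul, mul_add, add_mul, smul_add,
    mul_smul_comm, smul_mul_assoc, smul_smul, mul_assoc, rxθ', rxθ, hθh, rθh,
    hxh, rxh, h3, h3', mul_zero, smul_zero, add_zero, zero_add]
  match_scalars
  all_goals field_simp
  · linear_combination (-(q ^ 2)) * hsum
  · linear_combination (-(q ^ 3)) * hsum
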